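/- arXiv:2306.02186 — 2 statements merged into one kernel-verified Lean document; each statement's English description precedes it below -/
import Mathlib

section
/- Define for x > 0: F₂(x) = (3/x²)·(1 - tanh(x)/x) and F₄(x) = (2/x²)·(1 - sech(x)). Then F₂ and F₄ extend continuously to x = 0 with F₂(0) = F₄(0) = 1, and both satisfy 0 ≤ F₂(x) ≤ 1 and 0 ≤ F₄(x) ≤ 1 for all x ≥ 0. -/
open Real Set

private lemma mono_from_deriv {f f' : ℝ → ℝ} (hf : ∀ x, HasDerivAt f (f' x) x)
    (h0 : ∀ x, 0 < x → 0 ≤ f' x) {x : ℝ} (hx : 0 ≤ x) : f 0 ≤ f x := by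
  have hd : Differentiable ℝ f := fun y => (hf y).differentiableAt
  have hm : MonotoneOn f (Set.Ici 0) := by
    apply monotoneOn_of_deriv_nonneg (convex_Ici 0) hd.continuous.continuousOn
      (fun y _ => (hd y).differentiableWithinAt)
    intro y hy
    rw [interior_Ici, mem_Ioi] at hy
    rw [(hf y).deriv]
    exact h0 y hy
  exact hm (self_mem_Ici) hx hx

private lemma L1 {x : ℝ} (hx : 0 ≤ x) : Real.sinh x ≤ x * Real.cosh x := by
  have h := mono_from_deriv (f := fun y => y * Real.cosh y - Real.sinh y)
    (f' := fun y => y * Real.sinh y)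
    (fun y => by
      have := ((hasDerivAt_id y).mul (Real.hasDerivAt_cosh y)).sub (Real.hasDerivAt_sinh y)
      refine this.congr_deriv ?_; simp only [id_eq]; ring)
    (fun y hy => mul_nonneg hy.le (Real.sinh_nonneg_iff.mpr hy.le)) hx
  simp at h; linarith

private lemma L2 {x : ℝ} (hx : 0 ≤ x) : x ^ 3 / 3 ≤ x * Real.cosh x - Real.sinh x := by
  have h := mono_from_deriv (f := fun y => y * Real.cosh y - Real.sinh y - y ^ 3 / 3)
    (f' := fun y => y * (Real.sinh y - y))
    (fun y => by
      have := (((hasDerivAt_id y).mul (Real.hasDerivAt_cosh y)).sub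
        (Real.hasDerivAt_sinh y)).sub (((hasDerivAt_pow 3 y)).div_const 3)
      refine this.congr_deriv ?_; simp only [id_eq]; push_cast; ring)
    (fun y hy => mul_nonneg hy.le (by linarith [Real.self_lt_sinh_iff.mpr hy])) hx
  simp at h; linarith

private lemma L3 {x : ℝ} (hx : 0 ≤ x) :
    x * Real.cosh x - Real.sinh x ≤ x ^ 3 / 3 * Real.cosh x := by
  have h := mono_from_deriv
    (f := fun y => y ^ 3 / 3 * Real.cosh y - y * Real.cosh y + Real.sinh y)
    (f' := fun y => y * (y * Real.cosh y - Real.sinh y) + y ^ 3 / 3 * Real.sinh y)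
    (fun y => by
      have := ((((hasDerivAt_pow 3 y).div_const 3).mul (Real.hasDerivAt_cosh y)).sub
        ((hasDerivAt_id y).mul (Real.hasDerivAt_cosh y))).add (Real.hasDerivAt_sinh y)
      refine this.congr_deriv ?_; simp only [id_eq]; push_cast; ring)
    (fun y hy => by
      have h1 := L1 hy.le
      have h2 := Real.sinh_nonneg_iff.mpr hy.le
      have h3 : (0:ℝ) ≤ y ^ 3 / 3 := by positivity
      nlinarith) hx
  simp at h; linarith

private lemma L4 {x : ℝ} (hx : 0 ≤ x) : x ^ 2 / 2 ≤ Real.cosh x - 1 := by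
  have h := mono_from_deriv (f := fun y => Real.cosh y - y ^ 2 / 2)
    (f' := fun y => Real.sinh y - y)
    (fun y => by
      have := (Real.hasDerivAt_cosh y).sub ((hasDerivAt_pow 2 y).div_const 2)
      refine this.congr_deriv ?_; push_cast; ring)
    (fun y hy => by have := Real.self_lt_sinh_iff.mpr hy; show (0:ℝ) ≤ Real.sinh y - y; linarith) hx
  simp at h; linarith

private lemma L5 {x : ℝ} (hx : 0 ≤ x) : Real.cosh x - 1 ≤ x ^ 2 / 2 * Real.cosh x := by
  have h := mono_from_deriv (f := fun y => y ^ 2 / 2 * Real.cosh y - Real.cosh y)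
    (f' := fun y => (y * Real.cosh y - Real.sinh y) + y ^ 2 / 2 * Real.sinh y)
    (fun y => by
      have := (((hasDerivAt_pow 2 y).div_const 2).mul (Real.hasDerivAt_cosh y)).sub
        (Real.hasDerivAt_cosh y)
      refine this.congr_deriv ?_; push_cast; ring)
    (fun y hy => by
      have h1 := L1 hy.le
      have h2 := Real.sinh_nonneg_iff.mpr hy.le
      have h3 : (0:ℝ) ≤ y ^ 2 / 2 := by positivity
      nlinarith) hx
  simp at h; linarith

private lemma F2eq {x : ℝ} (hx : 0 < x) :
    3 / x ^ 2 * (1 - Real.tanh x / x) =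
      3 * (x * Real.cosh x - Real.sinh x) / (x ^ 3 * Real.cosh x) := by
  have hc : Real.cosh x ≠ 0 := (Real.cosh_pos x).ne'
  rw [Real.tanh_eq_sinh_div_cosh]
  field_simp

private lemma F4eq {x : ℝ} (hx : 0 < x) :
    2 / x ^ 2 * (1 - 1 / Real.cosh x) =
      2 * (Real.cosh x - 1) / (x ^ 2 * Real.cosh x) := by
  have hc : Real.cosh x ≠ 0 := (Real.cosh_pos x).ne'
  field_simp

private lemma F2bounds {x : ℝ} (hx : 0 < x) :
    1 / Real.cosh x ≤ 3 / x ^ 2 * (1 - Real.tanh x / x) ∧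
      3 / x ^ 2 * (1 - Real.tanh x / x) ≤ 1 := by
  have hc : 0 < Real.cosh x := Real.cosh_pos x
  have hd : 0 < x ^ 3 * Real.cosh x := by positivity
  rw [F2eq hx]
  constructor
  · rw [div_le_div_iff₀ hc hd]
    nlinarith [L2 hx.le]
  · rw [div_le_one hd]
    nlinarith [L3 hx.le]

private lemma F4bounds {x : ℝ} (hx : 0 < x) :
    1 / Real.cosh x ≤ 2 / x ^ 2 * (1 - 1 / Real.cosh x) ∧
      2 / x ^ 2 * (1 - 1 / Real.cosh x) ≤ 1 := by
  have hc : 0 < Real.cosh x := Real.cosh_pos x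
  have hd : 0 < x ^ 2 * Real.cosh x := by positivity
  rw [F4eq hx]
  constructor
  · rw [div_le_div_iff₀ hc hd]
    nlinarith [L4 hx.le]
  · rw [div_le_one hd]
    nlinarith [L5 hx.le]

private lemma inv_cosh_tendsto :
    Filter.Tendsto (fun x : ℝ => 1 / Real.cosh x) (nhdsWithin 0 (Set.Ioi 0)) (nhds 1) := by
  have : Filter.Tendsto (fun x : ℝ => 1 / Real.cosh x) (nhds 0) (nhds 1) := by
    have hc : Continuous (fun x : ℝ => 1 / Real.cosh x) :=
      continuous_const.div Real.continuous_cosh (fun x => (Real.cosh_pos x).ne')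
    simpa [Real.cosh_zero] using hc.tendsto 0
  exact this.mono_left nhdsWithin_le_nhds

/-- For `x > 0` set `F₂(x) = (3/x²)(1 - tanh x / x)` and
`F₄(x) = (2/x²)(1 - sech x)`. Then `F₂`, `F₄` extend continuously to `x = 0` with
value `1`, and both take values in `[0,1]` for all `x ≥ 0`. -/
theorem stmt11 :
    Filter.Tendsto (fun x : ℝ => 3 / x ^ 2 * (1 - Real.tanh x / x))
      (nhdsWithin 0 (Set.Ioi 0)) (nhds 1) ∧
    Filter.Tendsto (fun x : ℝ => 2 / x ^ 2 * (1 - 1 / Real.cosh x))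
      (nhdsWithin 0 (Set.Ioi 0)) (nhds 1) ∧
    (∀ x : ℝ, 0 < x → 3 / x ^ 2 * (1 - Real.tanh x / x) ∈ Set.Icc (0 : ℝ) 1) ∧
    (∀ x : ℝ, 0 < x → 2 / x ^ 2 * (1 - 1 / Real.cosh x) ∈ Set.Icc (0 : ℝ) 1) := by
  refine ⟨?_, ?_, ?_, ?_⟩
  · apply tendsto_of_tendsto_of_tendsto_of_le_of_le' inv_cosh_tendsto tendsto_const_nhds
    · filter_upwards [self_mem_nhdsWithin] with x hx using (F2bounds hx).1
    · filter_upwards [self_mem_nhdsWithin] with x hx using (F2bounds hx).2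
  · apply tendsto_of_tendsto_of_tendsto_of_le_of_le' inv_cosh_tendsto tendsto_const_nhds
    · filter_upwards [self_mem_nhdsWithin] with x hx using (F4bounds hx).1
    · filter_upwards [self_mem_nhdsWithin] with x hx using (F4bounds hx).2
  · intro x hx
    have h := F2bounds hx
    have : (0:ℝ) < 1 / Real.cosh x := by positivity
    exact ⟨by linarith [h.1], h.2⟩
  · intro x hx
    have h := F4bounds hx
    have : (0:ℝ) < 1 / Real.cosh x := by positivity
    exact ⟨by linarith [h.1], h.2⟩
end

section
/- For all a ≥ 0 and z ∈ [-1, 0]: the symbol of ∂_z F₀, namely n(ξ) = √μ|ξ|·sinh((z+1)√μ|ξ|)/cosh(√μ|ξ|), satisfies 0 ≤ n(ξ) ≤ μ|ξ|²·(z+1)·(cosh((z+1)√μ|ξ|)/cosh(√μ|ξ|)) ≤ μ|ξ|². In particular |∂_z F₀ u(·,z)|_{H^s} ≤ μ|∇u|_{H^{s+1}}. -/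
open MeasureTheory

lemma sinh_le_mul_cosh {b : ℝ} (hb : 0 ≤ b) : Real.sinh b ≤ b * Real.cosh b := by
  have h1 := Real.hasSum_sinh b
  have h2 := (Real.hasSum_cosh b).mul_left b
  refine hasSum_le ?_ h1 h2
  intro n
  have hp : (0:ℝ) ≤ b ^ (2 * n + 1) := pow_nonneg hb _
  have hfac : ((Nat.factorial (2*n)) : ℝ) ≤ ((Nat.factorial (2*n+1)) : ℝ) := by
    exact_mod_cast Nat.factorial_le (Nat.le_succ _)
  calc b ^ (2 * n + 1) / ((Nat.factorial (2*n+1)) : ℝ)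
      ≤ b ^ (2 * n + 1) / ((Nat.factorial (2*n)) : ℝ) := by
        apply div_le_div_of_nonneg_left hp ?_ hfac
        exact_mod_cast Nat.factorial_pos _
    _ = b * (b ^ (2*n) / ((Nat.factorial (2*n)) : ℝ)) := by ring

lemma symb_bounds {μ z : ℝ} (hμ : μ ∈ Set.Icc (0:ℝ) 1) (hz : z ∈ Set.Icc (-1:ℝ) 0)
    (r : ℝ) (hr : 0 ≤ r) :
    0 ≤ Real.sqrt μ * r *
        (Real.sinh ((z + 1) * (Real.sqrt μ * r)) / Real.cosh (Real.sqrt μ * r)) ∧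
    Real.sqrt μ * r *
        (Real.sinh ((z + 1) * (Real.sqrt μ * r)) / Real.cosh (Real.sqrt μ * r))
      ≤ μ * r ^ 2 * (z + 1) *
          (Real.cosh ((z + 1) * (Real.sqrt μ * r)) / Real.cosh (Real.sqrt μ * r)) ∧
    μ * r ^ 2 * (z + 1) *
        (Real.cosh ((z + 1) * (Real.sqrt μ * r)) / Real.cosh (Real.sqrt μ * r))
      ≤ μ * r ^ 2 := by
  obtain ⟨hμ0, hμ1⟩ := hμ
  obtain ⟨hz0, hz1⟩ := hz
  set b := Real.sqrt μ * r with hbdef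
  have hb : 0 ≤ b := mul_nonneg (Real.sqrt_nonneg μ) hr
  have ht0 : 0 ≤ z + 1 := by linarith
  have ht1 : z + 1 ≤ 1 := by linarith
  have htb : 0 ≤ (z + 1) * b := mul_nonneg ht0 hb
  have hcb : 0 < Real.cosh b := Real.cosh_pos b
  have hb2 : b ^ 2 = μ * r ^ 2 := by
    rw [hbdef, mul_pow, Real.sq_sqrt hμ0]
  refine ⟨?_, ?_, ?_⟩
  · exact mul_nonneg hb (div_nonneg ((Real.sinh_nonneg_iff.mpr htb)) hcb.le)
  · rw [mul_div_assoc', mul_div_assoc', div_le_div_iff_of_pos_right hcb]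
    calc b * Real.sinh ((z + 1) * b)
        ≤ b * ((z + 1) * b * Real.cosh ((z + 1) * b)) := by
          exact mul_le_mul_of_nonneg_left (sinh_le_mul_cosh htb) hb
      _ = b ^ 2 * (z + 1) * Real.cosh ((z + 1) * b) := by ring
      _ = μ * r ^ 2 * (z + 1) * Real.cosh ((z + 1) * b) := by rw [hb2]
  · have hcc : Real.cosh ((z + 1) * b) ≤ Real.cosh b := by
      rw [Real.cosh_le_cosh]
      rw [abs_of_nonneg htb, abs_of_nonneg hb]
      nlinarith
    have key : (z + 1) * (Real.cosh ((z + 1) * b) / Real.cosh b) ≤ 1 := by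
      have h1 : Real.cosh ((z + 1) * b) / Real.cosh b ≤ 1 := by
        rw [div_le_one hcb]; exact hcc
      have h2 : 0 ≤ Real.cosh ((z + 1) * b) / Real.cosh b :=
        div_nonneg (Real.cosh_pos _).le hcb.le
      nlinarith
    have hnn : 0 ≤ μ * r ^ 2 := mul_nonneg hμ0 (sq_nonneg r)
    calc μ * r ^ 2 * (z + 1) * (Real.cosh ((z + 1) * b) / Real.cosh b)
        = μ * r ^ 2 * ((z + 1) * (Real.cosh ((z + 1) * b) / Real.cosh b)) := by ring
      _ ≤ μ * r ^ 2 * 1 := mul_le_mul_of_nonneg_left key hnn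
      _ = μ * r ^ 2 := by ring

/-- for `μ ∈ [0,1]`, `z ∈ [-1,0]`, the symbol of `∂_z F₀`,
`n(ξ) = √μ|ξ|·sinh((z+1)√μ|ξ|)/cosh(√μ|ξ|)`, satisfies
`0 ≤ n(ξ) ≤ μ|ξ|²(z+1)·cosh((z+1)√μ|ξ|)/cosh(√μ|ξ|) ≤ μ|ξ|²`; in particular on the
Fourier side `|∂_z F₀ u(·,z)|_{H^s} ≤ μ|∇u|_{H^{s+1}}`. -/
theorem stmt15 {d : ℕ} (μ z s : ℝ) (hμ : μ ∈ Set.Icc (0:ℝ) 1)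
    (hz : z ∈ Set.Icc (-1 : ℝ) 0) :
    (∀ ξ : EuclideanSpace ℝ (Fin d),
      0 ≤ Real.sqrt μ * ‖ξ‖ *
          (Real.sinh ((z + 1) * (Real.sqrt μ * ‖ξ‖)) / Real.cosh (Real.sqrt μ * ‖ξ‖)) ∧
      Real.sqrt μ * ‖ξ‖ *
          (Real.sinh ((z + 1) * (Real.sqrt μ * ‖ξ‖)) / Real.cosh (Real.sqrt μ * ‖ξ‖))
        ≤ μ * ‖ξ‖ ^ 2 * (z + 1) *
            (Real.cosh ((z + 1) * (Real.sqrt μ * ‖ξ‖)) / Real.cosh (Real.sqrt μ * ‖ξ‖)) ∧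
      μ * ‖ξ‖ ^ 2 * (z + 1) *
          (Real.cosh ((z + 1) * (Real.sqrt μ * ‖ξ‖)) / Real.cosh (Real.sqrt μ * ‖ξ‖))
        ≤ μ * ‖ξ‖ ^ 2) ∧
    ∀ u : EuclideanSpace ℝ (Fin d) → ℂ,
      Integrable (fun ξ : EuclideanSpace ℝ (Fin d) =>
        (1 + ‖ξ‖ ^ 2) ^ (s + 1) * ‖ξ‖ ^ 2 * ‖FourierTransform.fourier u ξ‖ ^ 2) →
      (∫ ξ : EuclideanSpace ℝ (Fin d),
          (1 + ‖ξ‖ ^ 2) ^ s *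
            (Real.sqrt μ * ‖ξ‖ *
              (Real.sinh ((z + 1) * (Real.sqrt μ * ‖ξ‖)) / Real.cosh (Real.sqrt μ * ‖ξ‖))) ^ 2 *
            ‖FourierTransform.fourier u ξ‖ ^ 2)
        ≤ μ ^ 2 * ∫ ξ : EuclideanSpace ℝ (Fin d),
            (1 + ‖ξ‖ ^ 2) ^ (s + 1) * ‖ξ‖ ^ 2 * ‖FourierTransform.fourier u ξ‖ ^ 2 := by
  constructor
  · intro ξ; exact symb_bounds hμ hz ‖ξ‖ (norm_nonneg ξ)
  · intro u hint
    rw [← integral_const_mul]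
    apply integral_mono_of_nonneg
    · filter_upwards with ξ
      have h := symb_bounds hμ hz ‖ξ‖ (norm_nonneg ξ)
      have h1 : (0:ℝ) < 1 + ‖ξ‖ ^ 2 := by positivity
      exact mul_nonneg (mul_nonneg (Real.rpow_nonneg h1.le s) (sq_nonneg _)) (sq_nonneg _)
    · exact hint.const_mul _
    · filter_upwards with ξ
      obtain ⟨h0, h1, h2⟩ := symb_bounds hμ hz ‖ξ‖ (norm_nonneg ξ)
      have hn : Real.sqrt μ * ‖ξ‖ *
          (Real.sinh ((z + 1) * (Real.sqrt μ * ‖ξ‖)) / Real.cosh (Real.sqrt μ * ‖ξ‖))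
          ≤ μ * ‖ξ‖ ^ 2 := le_trans h1 h2
      have hX : (0:ℝ) < 1 + ‖ξ‖ ^ 2 := by positivity
      have hsq : (Real.sqrt μ * ‖ξ‖ *
          (Real.sinh ((z + 1) * (Real.sqrt μ * ‖ξ‖)) / Real.cosh (Real.sqrt μ * ‖ξ‖))) ^ 2
          ≤ (μ * ‖ξ‖ ^ 2) ^ 2 := pow_le_pow_left₀ h0 hn 2
      have hrs : (0:ℝ) ≤ (1 + ‖ξ‖ ^ 2) ^ s := Real.rpow_nonneg hX.le s
      have hrpow : (1 + ‖ξ‖ ^ 2) ^ (s + 1) = (1 + ‖ξ‖ ^ 2) ^ s * (1 + ‖ξ‖ ^ 2) :=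
        Real.rpow_add_one hX.ne' s
      calc (1 + ‖ξ‖ ^ 2) ^ s *
            (Real.sqrt μ * ‖ξ‖ *
              (Real.sinh ((z + 1) * (Real.sqrt μ * ‖ξ‖)) / Real.cosh (Real.sqrt μ * ‖ξ‖))) ^ 2 *
            ‖FourierTransform.fourier u ξ‖ ^ 2
          ≤ (1 + ‖ξ‖ ^ 2) ^ s * (μ * ‖ξ‖ ^ 2) ^ 2 * ‖FourierTransform.fourier u ξ‖ ^ 2 := by
            apply mul_le_mul_of_nonneg_right _ (sq_nonneg _)
            exact mul_le_mul_of_nonneg_left hsq hrs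
        _ = μ ^ 2 * ((1 + ‖ξ‖ ^ 2) ^ s * (‖ξ‖ ^ 2 * ‖ξ‖ ^ 2) * ‖FourierTransform.fourier u ξ‖ ^ 2) := by
            ring
        _ ≤ μ ^ 2 * ((1 + ‖ξ‖ ^ 2) ^ s * ((1 + ‖ξ‖ ^ 2) * ‖ξ‖ ^ 2) * ‖FourierTransform.fourier u ξ‖ ^ 2) := by
            apply mul_le_mul_of_nonneg_left _ (sq_nonneg μ)
            apply mul_le_mul_of_nonneg_right _ (sq_nonneg _)
            apply mul_le_mul_of_nonneg_left _ hrs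
            apply mul_le_mul_of_nonneg_right _ (sq_nonneg _)
            linarith
        _ = μ ^ 2 * ((1 + ‖ξ‖ ^ 2) ^ (s + 1) * ‖ξ‖ ^ 2 * ‖FourierTransform.fourier u ξ‖ ^ 2) := by
            rw [hrpow]; ring
end
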